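/- Let g be a quadratic Lie algebra, E a vector space, φ : g → E linear with φ^a = φ(e^a). Then the element γ^g − Σ_a e_a ⊗ φ^a of C^∞(g) ⊗ Cl(g) ⊗ ΛE (odd part) is closed under the differential δ^g + Σ_a (∂/∂μ^a) ⊗ φ^a, where γ^g(μ) = q(λ(ad_μ)) and μ^a are the coordinates on g. -/

import Mathlib

noncomputable instance : Invertible (2 : ℝ) := invertibleOfNonzero two_ne_zero

set_option linter.unusedSectionVars false
set_option maxHeartbeats 1000000

open CliffordAlgebra Finset

namespace CliffordClosed

section Sum3

variable {ι : Type*} [Fintype ι] {M : Type*} [AddCommGroup M] [Module ℝ M]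

theorem sum3_swap12 (F : ι → ι → ι → M) :
    ∑ a, ∑ b, ∑ e, F a b e = ∑ a, ∑ b, ∑ e, F b a e := Finset.sum_comm

theorem sum3_swap23 (F : ι → ι → ι → M) :
    ∑ a, ∑ b, ∑ e, F a b e = ∑ a, ∑ b, ∑ e, F a e b :=
  Finset.sum_congr rfl fun _ _ => Finset.sum_comm

theorem sum3_cycle (F : ι → ι → ι → M) :
    ∑ a, ∑ b, ∑ e, F a b e = ∑ a, ∑ b, ∑ e, F b e a :=
  (sum3_swap23 F).trans (sum3_swap12 (fun a b e => F a e b))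

theorem sum3_swap13 (F : ι → ι → ι → M) :
    ∑ a, ∑ b, ∑ e, F a b e = ∑ a, ∑ b, ∑ e, F e b a :=
  ((sum3_swap23 F).trans (sum3_swap12 (fun a b e => F a e b))).trans
    (sum3_swap23 (fun a b e => F b e a))

theorem sum3_rotate (F : ι → ι → ι → M) :
    ∑ a, ∑ b, ∑ e, F a b e = ∑ b, ∑ e, ∑ a, F a b e := by
  rw [Finset.sum_comm]
  exact Finset.sum_congr rfl fun b _ => Finset.sum_comm

theorem sum3_unrotate (F : ι → ι → ι → M) :
    ∑ b, ∑ e, ∑ a, F a b e = ∑ a, ∑ b, ∑ e, F a b e := (sum3_rotate F).symm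

theorem eq_zero_of_eq_neg {x : M} (h : x = -x) : x = 0 := by
  have h2 : (2:ℝ) • x = 0 := by rw [two_smul]; nth_rewrite 1 [h]; abel
  have := congrArg (fun t => (2⁻¹:ℝ) • t) h2
  simpa [smul_smul] using this

theorem sum3_neg (F : ι → ι → ι → M) :
    ∑ a, ∑ b, ∑ e, -F a b e = -∑ a, ∑ b, ∑ e, F a b e := by
  simp [Finset.sum_neg_distrib]

theorem sum3_zero12 (F : ι → ι → ι → M) (h : ∀ a b e, F a b e = -F b a e) :
    ∑ a, ∑ b, ∑ e, F a b e = 0 := by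
  refine eq_zero_of_eq_neg ?_
  calc ∑ a, ∑ b, ∑ e, F a b e = ∑ a, ∑ b, ∑ e, F b a e := sum3_swap12 F
    _ = ∑ a, ∑ b, ∑ e, -F a b e := by
        refine Finset.sum_congr rfl fun a _ => Finset.sum_congr rfl fun b _ =>
          Finset.sum_congr rfl fun e _ => h b a e
    _ = -∑ a, ∑ b, ∑ e, F a b e := sum3_neg F

theorem sum3_zero23 (F : ι → ι → ι → M) (h : ∀ a b e, F a b e = -F a e b) :
    ∑ a, ∑ b, ∑ e, F a b e = 0 := by
  refine eq_zero_of_eq_neg ?_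
  calc ∑ a, ∑ b, ∑ e, F a b e = ∑ a, ∑ b, ∑ e, F a e b := sum3_swap23 F
    _ = ∑ a, ∑ b, ∑ e, -F a b e := by
        refine Finset.sum_congr rfl fun a _ => Finset.sum_congr rfl fun b _ =>
          Finset.sum_congr rfl fun e _ => h a e b
    _ = -∑ a, ∑ b, ∑ e, F a b e := sum3_neg F

theorem sum3_zero13 (F : ι → ι → ι → M) (h : ∀ a b e, F a b e = -F e b a) :
    ∑ a, ∑ b, ∑ e, F a b e = 0 := by
  refine eq_zero_of_eq_neg ?_
  calc ∑ a, ∑ b, ∑ e, F a b e = ∑ a, ∑ b, ∑ e, F e b a := sum3_swap13 F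
    _ = ∑ a, ∑ b, ∑ e, -F a b e := by
        refine Finset.sum_congr rfl fun a _ => Finset.sum_congr rfl fun b _ =>
          Finset.sum_congr rfl fun e _ => h e b a
    _ = -∑ a, ∑ b, ∑ e, F a b e := sum3_neg F

end Sum3

variable {g E ι : Type*} [Fintype ι] [DecidableEq ι]
    [LieRing g] [LieAlgebra ℝ g] [Module.Finite ℝ g]
    [AddCommGroup E] [Module ℝ E]
    (B : LinearMap.BilinForm ℝ g)
    (hBsym : ∀ x y, B x y = B y x) (hB : B.Nondegenerate)
    (hinv : ∀ x y z, B ⁅x, y⁆ z = B x ⁅y, z⁆)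
    (bs : Module.Basis ι ℝ g) (ds : ι → g)
    (hds : ∀ a b, B (ds a) (bs b) = if a = b then 1 else 0)

include hds in
theorem coord_eq (a : ι) : (B (ds a) : g →ₗ[ℝ] ℝ) = bs.coord a := by
  refine bs.ext fun b => ?_
  rw [hds a b, Module.Basis.coord_apply, Module.Basis.repr_self]
  simp [Finsupp.single_apply, eq_comm]

include hds in
theorem exp1 (x : g) : ∑ a, B (ds a) x • bs a = x := by
  have : ∀ a, B (ds a) x = bs.repr x a := fun a => by
    rw [show B (ds a) x = (B (ds a) : g →ₗ[ℝ] ℝ) x from rfl, coord_eq B bs ds hds a,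
      Module.Basis.coord_apply]
  simp_rw [this]
  exact Module.Basis.sum_repr bs x

include hBsym hB hds in
theorem exp2 (x : g) : ∑ a, B x (bs a) • ds a = x := by
  have key : ∀ n, B (∑ a, B x (bs a) • ds a - x) n = 0 := by
    intro n
    rw [map_sub, LinearMap.sub_apply]
    have h1 : B (∑ a, B x (bs a) • ds a) n = ∑ a, B x (bs a) * B (ds a) n := by
      rw [map_sum, LinearMap.sum_apply]
      refine Finset.sum_congr rfl fun a _ => ?_
      rw [map_smul, LinearMap.smul_apply, smul_eq_mul]
    rw [h1, sub_eq_zero]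
    have h2 : B x n = B x (∑ a, B (ds a) n • bs a) := by rw [exp1 B bs ds hds n]
    rw [h2, map_sum]
    refine Finset.sum_congr rfl fun a _ => ?_
    rw [map_smul, smul_eq_mul]
    ring
  exact sub_eq_zero.mp (hB.1 _ key)

include hds in
theorem sum_contract1 {M : Type*} [AddCommGroup M] [Module ℝ M] (f : g →ₗ[ℝ] M) (x : g) :
    ∑ a, B (ds a) x • f (bs a) = f x := by
  conv_rhs => rw [← exp1 B bs ds hds x]
  rw [map_sum]
  exact Finset.sum_congr rfl fun a _ => (map_smul f _ _).symm

include hBsym hB hds in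
theorem sum_contract2 {M : Type*} [AddCommGroup M] [Module ℝ M] (f : g →ₗ[ℝ] M) (x : g) :
    ∑ a, B x (bs a) • f (ds a) = f x := by
  conv_rhs => rw [← exp2 B hBsym hB bs ds hds x]
  rw [map_sum]
  exact Finset.sum_congr rfl fun a _ => (map_smul f _ _).symm

include hBsym hB hinv hds in
theorem trace_zero (x : g) : ∑ a, B ⁅x, bs a⁆ (ds a) = 0 := by
  set A := LieAlgebra.ad ℝ g x with hA
  have hAz : ∀ z, A z = ⁅x, z⁆ := fun z => rfl
  have hS : ∑ a, B (bs a) (A (ds a)) = ∑ a, B (ds a) (A (bs a)) := by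
    calc ∑ a, B (bs a) (A (ds a))
        = ∑ a, ∑ e, B (ds e) (A (ds a)) * B (bs a) (bs e) := by
          refine Finset.sum_congr rfl fun a _ => ?_
          conv_lhs => rw [← exp1 B bs ds hds (A (ds a))]
          rw [map_sum]
          exact Finset.sum_congr rfl fun e _ => by rw [map_smul, smul_eq_mul]
      _ = ∑ e, ∑ a, B (bs e) (bs a) • ((B (ds e)) ∘ₗ A) (ds a) := by
          rw [Finset.sum_comm]
          refine Finset.sum_congr rfl fun e _ => Finset.sum_congr rfl fun a _ => ?_
          rw [LinearMap.comp_apply, smul_eq_mul, hBsym (bs e) (bs a)]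
          ring
      _ = ∑ e, B (ds e) (A (bs e)) := by
          refine Finset.sum_congr rfl fun e _ => ?_
          rw [sum_contract2 B hBsym hB bs ds hds ((B (ds e)) ∘ₗ A) (bs e)]
          rfl
  have hTS : ∀ a, B (ds a) (A (bs a)) = -(B (bs a) (A (ds a))) := by
    intro a
    have e1 : B ⁅ds a, x⁆ (bs a) = B (ds a) ⁅x, bs a⁆ := hinv _ _ _
    have e2 : (⁅ds a, x⁆ : g) = -⁅x, ds a⁆ :=
      (neg_neg (⁅ds a, x⁆:g)).symm.trans (congrArg Neg.neg (lie_skew x (ds a)))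
    rw [hAz, hAz, ← e1, e2, map_neg, LinearMap.neg_apply, hBsym]
  have hTneg : ∑ a, B (ds a) (A (bs a)) = -∑ a, B (bs a) (A (ds a)) := by
    rw [← Finset.sum_neg_distrib]
    exact Finset.sum_congr rfl fun a _ => hTS a
  have h1 : ∑ a, B (ds a) (A (bs a)) = 0 := by linarith
  calc ∑ a, B ⁅x, bs a⁆ (ds a) = ∑ a, B (ds a) (A (bs a)) :=
        Finset.sum_congr rfl fun a _ => by rw [hBsym]; rw [hAz]
    _ = 0 := h1

/-- The quadratic form on `g × E`. -/
noncomputable def QQ : QuadraticForm ℝ (g × E) :=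
  ((2:ℝ)⁻¹ • B.toQuadraticMap).prod (0 : QuadraticForm ℝ E)

variable (hBsym : ∀ x y, B x y = B y x)

include hBsym in
theorem polar_QQ (p q : g × E) :
    QuadraticMap.polar (QQ (E := E) B) p q = B p.1 q.1 := by
  simp [QQ, QuadraticMap.polar_smul, LinearMap.BilinMap.polar_toQuadraticMap, hBsym p.1 q.1,
    smul_eq_mul, QuadraticMap.polar]
  ring

include hBsym in
theorem assoc_QQ (p q : g × E) :
    QuadraticMap.associated (R := ℝ) (QQ (E := E) B) p q = 2⁻¹ * B p.1 q.1 := by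
  have h2 := congrFun (congrArg (DFunLike.coe) (congrFun (congrArg DFunLike.coe
    (QuadraticMap.two_nsmul_associated ℝ (QQ (E := E) B))) p)) q
  simp only [QuadraticMap.polarBilin_apply_apply] at h2
  rw [polar_QQ B hBsym p q] at h2
  rw [two_smul] at h2
  have : QuadraticMap.associated (R := ℝ) (QQ (E := E) B)
      = QuadraticMap.associatedHom ℝ (QQ (E := E) B) := rfl
  rw [this]
  simp only [LinearMap.add_apply] at h2
  linarith

/-- `v x` is the Clifford generator from `g`. -/
noncomputable def vv (x : g) : CliffordAlgebra (QQ (E := E) B) :=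
  CliffordAlgebra.ι _ ((x, 0) : g × E)

/-- `w u` is the Clifford generator from `E`. -/
noncomputable def ww (u : E) : CliffordAlgebra (QQ (E := E) B) :=
  CliffordAlgebra.ι _ ((0, u) : g × E)

theorem vv_add (x y : g) : vv (E := E) B (x + y) = vv B x + vv B y := by
  unfold vv
  rw [show ((x + y, (0:E)) : g × E) = (x, 0) + (y, 0) by simp, map_add]

theorem vv_smul (r : ℝ) (x : g) : vv (E := E) B (r • x) = r • vv B x := by
  unfold vv
  rw [show ((r • x, (0:E)) : g × E) = r • (x, 0) by simp, map_smul]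

include hBsym in
theorem vv_swap (x y : g) :
    vv (E := E) B y * vv B x = algebraMap ℝ _ (B x y) - vv B x * vv B y := by
  unfold vv
  rw [ι_mul_ι_comm, polar_QQ B hBsym]
  simp [hBsym x y]

include hBsym in
theorem vv_ww_swap (x : g) (u : E) :
    ww (E := E) B u * vv B x = -(vv B x * ww B u) := by
  unfold vv ww
  rw [ι_mul_ι_comm, polar_QQ B hBsym]
  simp

include hBsym in
theorem ww_vv_swap (x : g) (u : E) :
    vv (E := E) B x * ww B u = -(ww B u * vv B x) := by
  rw [vv_ww_swap B hBsym, neg_neg]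

theorem involute_vv (x : g) : involute (vv (E := E) B x) = -vv B x := involute_ι _

theorem involute_ww (u : E) : involute (ww (E := E) B u) = -ww B u := involute_ι _

/-- the quantization map -/
noncomputable def qb : ExteriorAlgebra ℝ (g × E) ≃ₗ[ℝ] CliffordAlgebra (QQ (E := E) B) :=
  (CliffordAlgebra.equivExterior (QQ (E := E) B)).symm

theorem qb_eq_changeForm (x : ExteriorAlgebra ℝ (g × E)) :
    qb (E := E) B x = changeForm
      (changeForm.neg_proof changeForm.associated_neg_proof) x := rfl

include hBsym in
theorem neg_assoc_neg_eval (p q : g × E) :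
    (-(QuadraticMap.associated (R := ℝ) (-(QQ (E := E) B)))) p q = 2⁻¹ * B p.1 q.1 := by
  have : QuadraticMap.associated (R := ℝ) (-(QQ (E := E) B))
      = -(QuadraticMap.associated (R := ℝ) (QQ (E := E) B)) :=
    map_neg (QuadraticMap.associatedHom ℝ) _
  rw [this]
  simp only [LinearMap.neg_apply, neg_neg]
  exact assoc_QQ B hBsym p q

include hBsym in
theorem qb_two (m₁ m₂ : g × E) :
    qb (E := E) B (ExteriorAlgebra.ι ℝ m₁ * ExteriorAlgebra.ι ℝ m₂) =
      CliffordAlgebra.ι (QQ (E := E) B) m₁ * CliffordAlgebra.ι _ m₂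
        - algebraMap ℝ _ (2⁻¹ * B m₁.1 m₂.1) := by
  rw [qb_eq_changeForm]
  rw [show ExteriorAlgebra.ι ℝ (M := g × E) = CliffordAlgebra.ι 0 from rfl]
  rw [changeForm_ι_mul_ι]
  rw [show ((-(QuadraticMap.associated (R := ℝ) (-(QQ (E := E) B)))) m₁) m₂
    = 2⁻¹ * B m₁.1 m₂.1 from neg_assoc_neg_eval B hBsym m₁ m₂]



include hBsym in
theorem vv_anticomm (x y : g) :
    vv (E := E) B x * vv B y + vv B y * vv B x = B x y • (1 : CliffordAlgebra (QQ (E := E) B)) := by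
  unfold vv
  rw [ι_mul_ι_add_swap, polar_QQ B hBsym, Algebra.smul_def, mul_one]

include hBsym in
theorem qb_three (m₁ m₂ m₃ : g × E) :
    qb (E := E) B (ExteriorAlgebra.ι ℝ m₁ * ExteriorAlgebra.ι ℝ m₂ * ExteriorAlgebra.ι ℝ m₃) =
      CliffordAlgebra.ι (QQ (E := E) B) m₁ * CliffordAlgebra.ι _ m₂ * CliffordAlgebra.ι _ m₃
        - (2⁻¹ * B m₂.1 m₃.1) • CliffordAlgebra.ι _ m₁
        - (2⁻¹ * B m₁.1 m₂.1) • CliffordAlgebra.ι _ m₃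
        + (2⁻¹ * B m₁.1 m₃.1) • CliffordAlgebra.ι _ m₂ := by
  rw [mul_assoc, qb_eq_changeForm]
  rw [show ExteriorAlgebra.ι ℝ (M := g × E) = CliffordAlgebra.ι 0 from rfl]
  rw [changeForm_ι_mul, changeForm_ι_mul_ι]
  rw [map_sub]
  rw [contractLeft_ι_mul, contractLeft_ι, contractLeft_algebraMap]
  rw [neg_assoc_neg_eval B hBsym, neg_assoc_neg_eval B hBsym, neg_assoc_neg_eval B hBsym]
  simp only [mul_sub, sub_mul, smul_mul_assoc, mul_smul_comm, sub_zero]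
  rw [show (CliffordAlgebra.ι (QQ (E := E) B)) m₂ * (algebraMap ℝ _) (2⁻¹ * B m₁.1 m₃.1)
      = (2⁻¹ * B m₁.1 m₃.1) • CliffordAlgebra.ι (QQ (E := E) B) m₂ from by
    rw [← Algebra.commutes, ← Algebra.smul_def]]
  rw [show (CliffordAlgebra.ι (QQ (E := E) B)) m₁ * (algebraMap ℝ _) (2⁻¹ * B m₂.1 m₃.1)
      = (2⁻¹ * B m₂.1 m₃.1) • CliffordAlgebra.ι (QQ (E := E) B) m₁ from by
    rw [← Algebra.commutes, ← Algebra.smul_def]]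
  rw [← mul_assoc]
  abel


/-- the linear map `x ↦ v x` -/
noncomputable def vmap : g →ₗ[ℝ] CliffordAlgebra (QQ (E := E) B) :=
  (CliffordAlgebra.ι _) ∘ₗ (LinearMap.inl ℝ g E)

theorem vmap_apply (x : g) : vmap (E := E) B x = vv B x := rfl

include hinv in
theorem c_swap12 (a b e : ι) :
    B (ds a) ⁅ds b, ds e⁆ = -(B (ds b) ⁅ds a, ds e⁆) := by
  rw [← hinv (ds a) (ds b) (ds e), ← hinv (ds b) (ds a) (ds e)]
  rw [show (⁅ds a, ds b⁆ : g) = -⁅ds b, ds a⁆ from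
    (neg_neg (⁅ds a, ds b⁆:g)).symm.trans (congrArg Neg.neg (lie_skew (ds b) (ds a)))]
  rw [map_neg, LinearMap.neg_apply]

theorem c_swap23 (a b e : ι) :
    B (ds a) ⁅ds b, ds e⁆ = -(B (ds a) ⁅ds e, ds b⁆) := by
  rw [show (⁅ds b, ds e⁆ : g) = -⁅ds e, ds b⁆ from
    (neg_neg (⁅ds b, ds e⁆:g)).symm.trans (congrArg Neg.neg (lie_skew (ds e) (ds b)))]
  rw [map_neg]

include hinv in
theorem c_swap13 (a b e : ι) :
    B (ds a) ⁅ds b, ds e⁆ = -(B (ds e) ⁅ds b, ds a⁆) := by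
  rw [c_swap12 B hinv ds a b e, c_swap23 B ds b a e, c_swap12 B hinv ds b e a]
  rw [neg_neg]

/-- The quantized cubic element. -/
noncomputable def qTheta : CliffordAlgebra (QQ (E := E) B) :=
  (-(6:ℝ)⁻¹) • ∑ a, ∑ b, ∑ e, (B (ds a) ⁅ds b, ds e⁆) •
    (vv B (bs a) * vv B (bs b) * vv B (bs e))

include hBsym hinv in
theorem Theta_quant :
    qb (E := E) B ((-(6 : ℝ)⁻¹) • ∑ a, ∑ b, ∑ e,
      (B (ds a) ⁅ds b, ds e⁆) •
        (ExteriorAlgebra.ι ℝ ((bs a, 0) : g × E) *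
          ExteriorAlgebra.ι ℝ ((bs b, 0) : g × E) *
          ExteriorAlgebra.ι ℝ ((bs e, 0) : g × E)))
    = qTheta B bs ds := by
  rw [map_smul]
  simp only [map_sum]
  unfold qTheta
  congr 1
  have step : ∀ a b e : ι,
      qb (E := E) B ((B (ds a) ⁅ds b, ds e⁆) •
        (ExteriorAlgebra.ι ℝ ((bs a, 0) : g × E) *
          ExteriorAlgebra.ι ℝ ((bs b, 0) : g × E) *
          ExteriorAlgebra.ι ℝ ((bs e, 0) : g × E)))
      = (B (ds a) ⁅ds b, ds e⁆) • (vv B (bs a) * vv B (bs b) * vv B (bs e))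
        - (B (ds a) ⁅ds b, ds e⁆) • ((2⁻¹ * B (bs b) (bs e)) • vv (E := E) B (bs a))
        - (B (ds a) ⁅ds b, ds e⁆) • ((2⁻¹ * B (bs a) (bs b)) • vv (E := E) B (bs e))
        + (B (ds a) ⁅ds b, ds e⁆) • ((2⁻¹ * B (bs a) (bs e)) • vv (E := E) B (bs b)) := by
    intro a b e
    rw [map_smul]
    unfold vv
    rw [qb_three B hBsym]
    simp only [smul_sub, smul_add]
  rw [Finset.sum_congr rfl fun a _ => Finset.sum_congr rfl fun b _ =>
    Finset.sum_congr rfl fun e _ => step a b e]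
  simp only [Finset.sum_sub_distrib, Finset.sum_add_distrib]
  have hY : ∑ a, ∑ b, ∑ e, (B (ds a) ⁅ds b, ds e⁆) •
      ((2⁻¹ * B (bs b) (bs e)) • vv (E := E) B (bs a)) = 0 := by
    refine sum3_zero23 _ fun a b e => ?_
    rw [c_swap23 B ds a b e, hBsym (bs b) (bs e), neg_smul]
  have hZ : ∑ a, ∑ b, ∑ e, (B (ds a) ⁅ds b, ds e⁆) •
      ((2⁻¹ * B (bs a) (bs b)) • vv (E := E) B (bs e)) = 0 := by
    refine sum3_zero12 _ fun a b e => ?_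
    rw [c_swap12 B hinv ds a b e, hBsym (bs a) (bs b), neg_smul]
  have hW : ∑ a, ∑ b, ∑ e, (B (ds a) ⁅ds b, ds e⁆) •
      ((2⁻¹ * B (bs a) (bs e)) • vv (E := E) B (bs b)) = 0 := by
    refine sum3_zero13 _ fun a b e => ?_
    rw [c_swap13 B hinv ds a b e, hBsym (bs a) (bs e), neg_smul]
  rw [hY, hZ, hW]
  abel


/-- the Clifford-algebra form of γ. -/
noncomputable def gammaC (x : g) : CliffordAlgebra (QQ (E := E) B) :=
  (2⁻¹:ℝ) • ∑ a, vv B ⁅x, bs a⁆ * vv B (ds a)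

include hBsym hB hinv hds in
theorem gamma_eq (μ : g) :
    qb (E := E) B ((1 / 2 : ℝ) • ∑ a,
        ExteriorAlgebra.ι ℝ ((⁅μ, bs a⁆, 0) : g × E) *
          ExteriorAlgebra.ι ℝ ((ds a, 0) : g × E))
      = gammaC B bs ds μ := by
  rw [map_smul]
  simp only [map_sum]
  rw [Finset.sum_congr rfl fun a (_ : a ∈ Finset.univ) => qb_two B hBsym (⁅μ, bs a⁆, 0) (ds a, 0)]
  dsimp only
  rw [Finset.sum_sub_distrib]
  rw [show ∑ a, algebraMap ℝ (CliffordAlgebra (QQ (E := E) B)) (2⁻¹ * B ⁅μ, bs a⁆ (ds a)) = 0 from by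
    rw [← map_sum, ← Finset.mul_sum, trace_zero B hBsym hB hinv bs ds hds μ, mul_zero, map_zero]]
  rw [sub_zero]
  unfold gammaC vv
  norm_num


include hBsym in
theorem anticomm_triple (x p q r : g) :
    vv (E := E) B x * (vv B p * vv B q * vv B r) + (vv B p * vv B q * vv B r) * vv B x
      = B x p • (vv B q * vv B r) - B x q • (vv B p * vv B r) + B x r • (vv B p * vv B q) := by
  have key : vv (E := E) B x * (vv B p * vv B q * vv B r) + (vv B p * vv B q * vv B r) * vv B x
      = (vv B x * vv B p + vv B p * vv B x) * (vv B q * vv B r)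
        - vv B p * ((vv B x * vv B q + vv B q * vv B x) * vv B r)
        + (vv B p * vv B q) * (vv B x * vv B r + vv B r * vv B x) := by noncomm_ring
  rw [key, vv_anticomm B hBsym, vv_anticomm B hBsym, vv_anticomm B hBsym]
  simp only [smul_mul_assoc, mul_smul_comm, one_mul, mul_one]

include hBsym hB hinv hds in
theorem gammaC_expand (x : g) :
    gammaC (E := E) B bs ds x
      = (2⁻¹:ℝ) • ∑ b, ∑ e, (B (ds e) ⁅ds b, x⁆) • (vv B (bs b) * vv B (bs e)) := by
  unfold gammaC
  congr 1
  have hprod : ∀ a, vv (E := E) B ⁅x, bs a⁆ * vv B (ds a)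
      = ∑ b, ∑ e, (B (ds b) ⁅x, bs a⁆ * B (ds e) (ds a)) • (vv B (bs b) * vv B (bs e)) := by
    intro a
    simp only [← vmap_apply]
    rw [← sum_contract1 B bs ds hds (vmap (E := E) B) ⁅x, bs a⁆,
      ← sum_contract1 B bs ds hds (vmap (E := E) B) (ds a)]
    rw [Finset.sum_mul]
    refine Finset.sum_congr rfl fun b _ => ?_
    rw [Finset.mul_sum]
    refine Finset.sum_congr rfl fun e _ => ?_
    rw [smul_mul_assoc, mul_smul_comm, smul_smul]
  rw [Finset.sum_congr rfl fun a (_ : a ∈ Finset.univ) => hprod a]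
  rw [sum3_rotate]
  refine Finset.sum_congr rfl fun b _ => Finset.sum_congr rfl fun e _ => ?_
  rw [← Finset.sum_smul]
  congr 1
  have : ∀ a, B (ds b) ⁅x, bs a⁆ * B (ds e) (ds a) = B ⁅ds b, x⁆ (bs a) • (B (ds e)) (ds a) := by
    intro a
    rw [hinv (ds b) x (bs a), smul_eq_mul]
  rw [Finset.sum_congr rfl fun a (_ : a ∈ Finset.univ) => this a]
  rw [sum_contract2 B hBsym hB bs ds hds (B (ds e)) ⁅ds b, x⁆]

include hBsym hB hinv hds in
theorem qTheta_anticomm (x : g) :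
    qTheta (E := E) B bs ds * vv B x + vv B x * qTheta B bs ds = gammaC B bs ds x := by
  unfold qTheta
  rw [smul_mul_assoc, mul_smul_comm, ← smul_add]
  simp only [Finset.sum_mul, Finset.mul_sum]
  rw [← Finset.sum_add_distrib]
  simp only [← Finset.sum_add_distrib]
  have step : ∀ a b e : ι,
      (B (ds a) ⁅ds b, ds e⁆) • (vv (E := E) B (bs a) * vv B (bs b) * vv B (bs e)) * vv B x
        + vv B x * ((B (ds a) ⁅ds b, ds e⁆) • (vv B (bs a) * vv B (bs b) * vv B (bs e)))
      = (B (ds a) ⁅ds b, ds e⁆) • (B x (bs a) • (vv B (bs b) * vv B (bs e)))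
        - (B (ds a) ⁅ds b, ds e⁆) • (B x (bs b) • (vv B (bs a) * vv B (bs e)))
        + (B (ds a) ⁅ds b, ds e⁆) • (B x (bs e) • (vv B (bs a) * vv B (bs b))) := by
    intro a b e
    rw [smul_mul_assoc, mul_smul_comm, ← smul_add, add_comm, anticomm_triple B hBsym]
    rw [smul_add, smul_sub]
  rw [Finset.sum_congr rfl fun a (_ : a ∈ Finset.univ) => Finset.sum_congr rfl
    fun b (_ : b ∈ Finset.univ) => Finset.sum_congr rfl
    fun e (_ : e ∈ Finset.univ) => step a b e]
  simp only [Finset.sum_sub_distrib, Finset.sum_add_distrib]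
  set S1 := ∑ a, ∑ b, ∑ e, (B (ds a) ⁅ds b, ds e⁆) •
    (B x (bs a) • (vv (E := E) B (bs b) * vv B (bs e))) with hS1
  have claim2 : ∑ a, ∑ b, ∑ e, (B (ds a) ⁅ds b, ds e⁆) •
      (B x (bs b) • (vv (E := E) B (bs a) * vv B (bs e))) = -S1 := by
    calc ∑ a, ∑ b, ∑ e, (B (ds a) ⁅ds b, ds e⁆) •
        (B x (bs b) • (vv (E := E) B (bs a) * vv B (bs e)))
        = ∑ a, ∑ b, ∑ e, (B (ds b) ⁅ds a, ds e⁆) •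
            (B x (bs a) • (vv (E := E) B (bs b) * vv B (bs e))) :=
          sum3_swap12 (fun a b e => (B (ds a) ⁅ds b, ds e⁆) •
            (B x (bs b) • (vv (E := E) B (bs a) * vv B (bs e))))
      _ = ∑ a, ∑ b, ∑ e, -((B (ds a) ⁅ds b, ds e⁆) •
            (B x (bs a) • (vv (E := E) B (bs b) * vv B (bs e)))) := by
          refine Finset.sum_congr rfl fun a _ => Finset.sum_congr rfl fun b _ =>
            Finset.sum_congr rfl fun e _ => ?_
          rw [c_swap12 B hinv ds b a e, neg_smul]
      _ = -S1 := by rw [sum3_neg, hS1]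
  have c_cycle : ∀ a b e : ι, B (ds b) ⁅ds e, ds a⁆ = B (ds a) ⁅ds b, ds e⁆ := by
    intro a b e
    rw [c_swap12 B hinv ds b e a, c_swap23 B ds e b a, c_swap12 B hinv ds e a b,
      c_swap23 B ds a e b]
    rw [neg_neg, neg_neg]
  have claim3 : ∑ a, ∑ b, ∑ e, (B (ds a) ⁅ds b, ds e⁆) •
      (B x (bs e) • (vv (E := E) B (bs a) * vv B (bs b))) = S1 := by
    rw [sum3_cycle (fun a b e => (B (ds a) ⁅ds b, ds e⁆) •
      (B x (bs e) • (vv (E := E) B (bs a) * vv B (bs b))))]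
    refine Finset.sum_congr rfl fun a _ => Finset.sum_congr rfl fun b _ =>
      Finset.sum_congr rfl fun e _ => ?_
    rw [c_cycle a b e]
  rw [claim2, claim3, sub_neg_eq_add]
  have harith : (-(6:ℝ)⁻¹) • (S1 + S1 + S1) = (-2⁻¹ : ℝ) • S1 := by module
  rw [harith]
  rw [gammaC_expand B hBsym hB hinv bs ds hds x]
  rw [hS1]
  rw [sum3_rotate (fun a b e => (B (ds a) ⁅ds b, ds e⁆) •
    (B x (bs a) • (vv (E := E) B (bs b) * vv B (bs e))))]
  rw [neg_smul, ← smul_neg]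
  congr 1
  simp only [← Finset.sum_neg_distrib]
  refine Finset.sum_congr rfl fun b _ => Finset.sum_congr rfl fun e _ => ?_
  have hf := sum_contract2 B hBsym hB bs ds hds
    (-(((LinearMap.flip B ⁅ds b, ds e⁆)).smulRight (vv (E := E) B (bs b) * vv B (bs e)))) x
  simp only [LinearMap.neg_apply, LinearMap.smulRight_apply, LinearMap.flip_apply] at hf
  calc ∑ a, -((B (ds a) ⁅ds b, ds e⁆) • (B x (bs a) • (vv (E := E) B (bs b) * vv B (bs e))))
      = ∑ a, B x (bs a) • -((B (ds a) ⁅ds b, ds e⁆) • (vv (E := E) B (bs b) * vv B (bs e))) := by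
        refine Finset.sum_congr rfl fun a _ => ?_
        rw [smul_comm, ← smul_neg]
    _ = -((B x ⁅ds b, ds e⁆) • (vv (E := E) B (bs b) * vv B (bs e))) := hf
    _ = (B (ds e) ⁅ds b, x⁆) • (vv (E := E) B (bs b) * vv B (bs e)) := by
        rw [← neg_smul]
        congr 1
        have e2 : (⁅ds b, x⁆:g) = -⁅x, ds b⁆ :=
          (neg_neg (⁅ds b, x⁆:g)).symm.trans (congrArg Neg.neg (lie_skew x (ds b)))
        rw [hBsym (ds e) ⁅ds b, x⁆, e2, map_neg, LinearMap.neg_apply, hinv x (ds b) (ds e)]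


include hBsym in
theorem comm_pair (p q y : g) :
    (vv (E := E) B p * vv B q) * vv B y - vv B y * (vv B p * vv B q)
      = B q y • vv B p - B p y • vv B q := by
  have key : (vv (E := E) B p * vv B q) * vv B y - vv B y * (vv B p * vv B q)
      = vv B p * (vv B q * vv B y + vv B y * vv B q)
        - (vv B p * vv B y + vv B y * vv B p) * vv B q := by noncomm_ring
  rw [key, vv_anticomm B hBsym, vv_anticomm B hBsym]
  simp only [smul_mul_assoc, mul_smul_comm, one_mul, mul_one]

include hBsym hB hinv hds in
theorem gamma_comm_v (x y : g) :
    gammaC (E := E) B bs ds x * vv B y - vv B y * gammaC B bs ds x = vv B ⁅x, y⁆ := by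
  unfold gammaC
  rw [smul_mul_assoc, mul_smul_comm, ← smul_sub]
  rw [Finset.sum_mul, Finset.mul_sum, ← Finset.sum_sub_distrib]
  rw [Finset.sum_congr rfl fun a (_ : a ∈ Finset.univ) => comm_pair B hBsym ⁅x, bs a⁆ (ds a) y]
  rw [Finset.sum_sub_distrib]
  have h1 : ∑ a, B (ds a) y • vv (E := E) B ⁅x, bs a⁆ = vv B ⁅x, y⁆ := by
    have := sum_contract1 B bs ds hds ((vmap (E := E) B) ∘ₗ (LieAlgebra.ad ℝ g x)) y
    simp only [LinearMap.comp_apply, LieAlgebra.ad_apply, vmap_apply] at this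
    exact this
  have h2 : ∑ a, B ⁅x, bs a⁆ y • vv (E := E) B (ds a) = -vv B ⁅x, y⁆ := by
    have hc : ∀ a, B ⁅x, bs a⁆ y = B ⁅y, x⁆ (bs a) := by
      intro a
      rw [hinv y x (bs a), hBsym]
    rw [Finset.sum_congr rfl fun a (_ : a ∈ Finset.univ) => by rw [hc a]]
    have := sum_contract2 B hBsym hB bs ds hds (vmap (E := E) B) ⁅y, x⁆
    simp only [vmap_apply] at this
    rw [this]
    have : (⁅y, x⁆:g) = -⁅x, y⁆ :=
      (neg_neg (⁅y, x⁆:g)).symm.trans (congrArg Neg.neg (lie_skew x y))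
    rw [this, show vv (E := E) B (-⁅x, y⁆) = -vv B ⁅x, y⁆ from map_neg (vmap (E := E) B) _]
  rw [h1, h2, sub_neg_eq_add]
  module

include hBsym hB hinv hds in
theorem gamma_comm_triple (x p q r : g) :
    gammaC (E := E) B bs ds x * (vv B p * vv B q * vv B r)
      - (vv B p * vv B q * vv B r) * gammaC B bs ds x
    = vv B ⁅x, p⁆ * (vv B q * vv B r) + vv B p * (vv B ⁅x, q⁆ * vv B r)
      + (vv B p * vv B q) * vv B ⁅x, r⁆ := by
  have key : gammaC (E := E) B bs ds x * (vv B p * vv B q * vv B r)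
      - (vv B p * vv B q * vv B r) * gammaC B bs ds x
    = (gammaC B bs ds x * vv B p - vv B p * gammaC B bs ds x) * (vv B q * vv B r)
      + vv B p * ((gammaC B bs ds x * vv B q - vv B q * gammaC B bs ds x) * vv B r)
      + (vv B p * vv B q) * (gammaC B bs ds x * vv B r - vv B r * gammaC B bs ds x) := by
    noncomm_ring
  rw [key, gamma_comm_v B hBsym hB hinv bs ds hds x p,
    gamma_comm_v B hBsym hB hinv bs ds hds x q, gamma_comm_v B hBsym hB hinv bs ds hds x r]


theorem br_comm (u w : g) : (⁅u, w⁆:g) = -⁅w, u⁆ :=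
  (neg_neg (⁅u, w⁆:g)).symm.trans (congrArg Neg.neg (lie_skew w u))

include hBsym hB hinv hds in
theorem U1_eq (x : g) :
    ∑ a, ∑ b, ∑ e, (B (ds a) ⁅ds b, ds e⁆) •
        (vv (E := E) B ⁅x, bs a⁆ * (vv B (bs b) * vv B (bs e)))
    = ∑ a, ∑ b, ∑ e, (B (ds a) ⁅x, ⁅ds b, ds e⁆⁆) •
        (vv (E := E) B (bs a) * (vv B (bs b) * vv B (bs e))) := by
  have expand : ∀ y : g, vv (E := E) B y = ∑ f, B (ds f) y • vv B (bs f) := by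
    intro y
    have := sum_contract1 B bs ds hds (vmap (E := E) B) y
    simp only [vmap_apply] at this
    exact this.symm
  have step : ∀ a b e : ι, (B (ds a) ⁅ds b, ds e⁆) •
      (vv (E := E) B ⁅x, bs a⁆ * (vv B (bs b) * vv B (bs e)))
      = ∑ f, B (ds f) ⁅x, bs a⁆ • ((B (ds a) ⁅ds b, ds e⁆) •
          (vv B (bs f) * (vv B (bs b) * vv B (bs e)))) := by
    intro a b e
    rw [expand ⁅x, bs a⁆, Finset.sum_mul, Finset.smul_sum]
    exact Finset.sum_congr rfl fun f _ => by rw [smul_mul_assoc, smul_comm]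
  rw [Finset.sum_congr rfl fun a (_ : a ∈ Finset.univ) => Finset.sum_congr rfl
    fun b (_ : b ∈ Finset.univ) => Finset.sum_congr rfl
    fun e (_ : e ∈ Finset.univ) => step a b e]
  calc ∑ a, ∑ b, ∑ e, ∑ f, B (ds f) ⁅x, bs a⁆ • ((B (ds a) ⁅ds b, ds e⁆) •
          (vv (E := E) B (bs f) * (vv B (bs b) * vv B (bs e))))
      = ∑ a, ∑ f, ∑ b, ∑ e, B (ds f) ⁅x, bs a⁆ • ((B (ds a) ⁅ds b, ds e⁆) •
          (vv (E := E) B (bs f) * (vv B (bs b) * vv B (bs e)))) := by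
        refine Finset.sum_congr rfl fun a _ => ?_
        exact sum3_unrotate (fun f b e => B (ds f) ⁅x, bs a⁆ • ((B (ds a) ⁅ds b, ds e⁆) •
          (vv (E := E) B (bs f) * (vv B (bs b) * vv B (bs e)))))
    _ = ∑ f, ∑ a, ∑ b, ∑ e, B (ds f) ⁅x, bs a⁆ • ((B (ds a) ⁅ds b, ds e⁆) •
          (vv (E := E) B (bs f) * (vv B (bs b) * vv B (bs e)))) := Finset.sum_comm
    _ = ∑ f, ∑ b, ∑ e, ∑ a, B (ds f) ⁅x, bs a⁆ • ((B (ds a) ⁅ds b, ds e⁆) •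
          (vv (E := E) B (bs f) * (vv B (bs b) * vv B (bs e)))) := by
        refine Finset.sum_congr rfl fun f _ => ?_
        exact sum3_rotate (fun a b e => B (ds f) ⁅x, bs a⁆ • ((B (ds a) ⁅ds b, ds e⁆) •
          (vv (E := E) B (bs f) * (vv B (bs b) * vv B (bs e)))))
    _ = ∑ a, ∑ b, ∑ e, (B (ds a) ⁅x, ⁅ds b, ds e⁆⁆) •
          (vv (E := E) B (bs a) * (vv B (bs b) * vv B (bs e))) := by
        refine Finset.sum_congr rfl fun f _ => Finset.sum_congr rfl fun b _ =>
          Finset.sum_congr rfl fun e _ => ?_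
        have hf := sum_contract2 B hBsym hB bs ds hds
          ((LinearMap.flip B ⁅ds b, ds e⁆).smulRight
            (vv (E := E) B (bs f) * (vv B (bs b) * vv B (bs e)))) ⁅ds f, x⁆
        simp only [LinearMap.smulRight_apply, LinearMap.flip_apply] at hf
        calc ∑ a, B (ds f) ⁅x, bs a⁆ • ((B (ds a) ⁅ds b, ds e⁆) •
              (vv (E := E) B (bs f) * (vv B (bs b) * vv B (bs e))))
            = ∑ a, B ⁅ds f, x⁆ (bs a) • ((B (ds a) ⁅ds b, ds e⁆) •
              (vv (E := E) B (bs f) * (vv B (bs b) * vv B (bs e)))) := by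
              refine Finset.sum_congr rfl fun a _ => ?_
              rw [hinv (ds f) x (bs a)]
          _ = B ⁅ds f, x⁆ ⁅ds b, ds e⁆ •
              (vv (E := E) B (bs f) * (vv B (bs b) * vv B (bs e))) := hf
          _ = (B (ds f) ⁅x, ⁅ds b, ds e⁆⁆) •
              (vv (E := E) B (bs f) * (vv B (bs b) * vv B (bs e))) := by
              rw [hinv (ds f) x ⁅ds b, ds e⁆]


include hBsym hB hinv hds in
theorem U2_eq (x : g) :
    ∑ a, ∑ b, ∑ e, (B (ds a) ⁅ds b, ds e⁆) •
        (vv (E := E) B (bs a) * (vv B ⁅x, bs b⁆ * vv B (bs e)))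
    = ∑ a, ∑ b, ∑ e, (B (ds a) ⁅⁅ds b, x⁆, ds e⁆) •
        (vv (E := E) B (bs a) * (vv B (bs b) * vv B (bs e))) := by
  have expand : ∀ y : g, vv (E := E) B y = ∑ f, B (ds f) y • vv B (bs f) := by
    intro y
    have := sum_contract1 B bs ds hds (vmap (E := E) B) y
    simp only [vmap_apply] at this
    exact this.symm
  have step : ∀ a b e : ι, (B (ds a) ⁅ds b, ds e⁆) •
      (vv (E := E) B (bs a) * (vv B ⁅x, bs b⁆ * vv B (bs e)))
      = ∑ f, B (ds f) ⁅x, bs b⁆ • ((B (ds a) ⁅ds b, ds e⁆) •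
          (vv B (bs a) * (vv B (bs f) * vv B (bs e)))) := by
    intro a b e
    rw [expand ⁅x, bs b⁆, Finset.sum_mul, Finset.mul_sum, Finset.smul_sum]
    exact Finset.sum_congr rfl fun f _ => by rw [smul_mul_assoc, mul_smul_comm, smul_comm]
  rw [Finset.sum_congr rfl fun a (_ : a ∈ Finset.univ) => Finset.sum_congr rfl
    fun b (_ : b ∈ Finset.univ) => Finset.sum_congr rfl
    fun e (_ : e ∈ Finset.univ) => step a b e]
  calc ∑ a, ∑ b, ∑ e, ∑ f, B (ds f) ⁅x, bs b⁆ • ((B (ds a) ⁅ds b, ds e⁆) •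
          (vv (E := E) B (bs a) * (vv B (bs f) * vv B (bs e))))
      = ∑ a, ∑ f, ∑ e, ∑ b, B (ds f) ⁅x, bs b⁆ • ((B (ds a) ⁅ds b, ds e⁆) •
          (vv (E := E) B (bs a) * (vv B (bs f) * vv B (bs e)))) := by
        refine Finset.sum_congr rfl fun a _ => ?_
        exact sum3_swap13 (fun b e f => B (ds f) ⁅x, bs b⁆ • ((B (ds a) ⁅ds b, ds e⁆) •
          (vv (E := E) B (bs a) * (vv B (bs f) * vv B (bs e)))))
    _ = ∑ a, ∑ b, ∑ e, (B (ds a) ⁅⁅ds b, x⁆, ds e⁆) •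
          (vv (E := E) B (bs a) * (vv B (bs b) * vv B (bs e))) := by
        refine Finset.sum_congr rfl fun a _ => Finset.sum_congr rfl fun f _ =>
          Finset.sum_congr rfl fun e _ => ?_
        have hf := sum_contract2 B hBsym hB bs ds hds
          (((B (ds a)) ∘ₗ (-(LieAlgebra.ad ℝ g (ds e)))).smulRight
            (vv (E := E) B (bs a) * (vv B (bs f) * vv B (bs e)))) ⁅ds f, x⁆
        simp only [LinearMap.smulRight_apply, LinearMap.comp_apply, LinearMap.neg_apply,
          LieAlgebra.ad_apply, map_neg, neg_smul] at hf
        calc ∑ b, B (ds f) ⁅x, bs b⁆ • ((B (ds a) ⁅ds b, ds e⁆) •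
              (vv (E := E) B (bs a) * (vv B (bs f) * vv B (bs e))))
            = ∑ b, B ⁅ds f, x⁆ (bs b) • (-((B (ds a) ⁅ds e, ds b⁆) •
              (vv (E := E) B (bs a) * (vv B (bs f) * vv B (bs e))))) := by
              refine Finset.sum_congr rfl fun b _ => ?_
              rw [hinv (ds f) x (bs b), c_swap23 B ds a b e, neg_smul]
          _ = -((B (ds a) ⁅ds e, ⁅ds f, x⁆⁆) •
              (vv (E := E) B (bs a) * (vv B (bs f) * vv B (bs e)))) := hf
          _ = (B (ds a) ⁅⁅ds f, x⁆, ds e⁆) •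
              (vv (E := E) B (bs a) * (vv B (bs f) * vv B (bs e))) := by
              rw [br_comm (⁅ds f, x⁆:g) (ds e), map_neg, neg_smul]


include hBsym hB hinv hds in
theorem U3_eq (x : g) :
    ∑ a, ∑ b, ∑ e, (B (ds a) ⁅ds b, ds e⁆) •
        ((vv (E := E) B (bs a) * vv B (bs b)) * vv B ⁅x, bs e⁆)
    = ∑ a, ∑ b, ∑ e, (B (ds a) ⁅ds b, ⁅ds e, x⁆⁆) •
        (vv (E := E) B (bs a) * (vv B (bs b) * vv B (bs e))) := by
  have expand : ∀ y : g, vv (E := E) B y = ∑ f, B (ds f) y • vv B (bs f) := by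
    intro y
    have := sum_contract1 B bs ds hds (vmap (E := E) B) y
    simp only [vmap_apply] at this
    exact this.symm
  have step : ∀ a b e : ι, (B (ds a) ⁅ds b, ds e⁆) •
      ((vv (E := E) B (bs a) * vv B (bs b)) * vv B ⁅x, bs e⁆)
      = ∑ f, B (ds f) ⁅x, bs e⁆ • ((B (ds a) ⁅ds b, ds e⁆) •
          (vv B (bs a) * (vv B (bs b) * vv B (bs f)))) := by
    intro a b e
    rw [expand ⁅x, bs e⁆, Finset.mul_sum, Finset.smul_sum]
    refine Finset.sum_congr rfl fun f _ => ?_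
    rw [mul_smul_comm, mul_assoc, smul_comm]
  rw [Finset.sum_congr rfl fun a (_ : a ∈ Finset.univ) => Finset.sum_congr rfl
    fun b (_ : b ∈ Finset.univ) => Finset.sum_congr rfl
    fun e (_ : e ∈ Finset.univ) => step a b e]
  calc ∑ a, ∑ b, ∑ e, ∑ f, B (ds f) ⁅x, bs e⁆ • ((B (ds a) ⁅ds b, ds e⁆) •
          (vv (E := E) B (bs a) * (vv B (bs b) * vv B (bs f))))
      = ∑ a, ∑ b, ∑ f, ∑ e, B (ds f) ⁅x, bs e⁆ • ((B (ds a) ⁅ds b, ds e⁆) •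
          (vv (E := E) B (bs a) * (vv B (bs b) * vv B (bs f)))) := by
        refine Finset.sum_congr rfl fun a _ => Finset.sum_congr rfl fun b _ => Finset.sum_comm
    _ = ∑ a, ∑ b, ∑ e, (B (ds a) ⁅ds b, ⁅ds e, x⁆⁆) •
          (vv (E := E) B (bs a) * (vv B (bs b) * vv B (bs e))) := by
        refine Finset.sum_congr rfl fun a _ => Finset.sum_congr rfl fun b _ =>
          Finset.sum_congr rfl fun f _ => ?_
        have hf := sum_contract2 B hBsym hB bs ds hds
          (((B (ds a)) ∘ₗ (LieAlgebra.ad ℝ g (ds b))).smulRight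
            (vv (E := E) B (bs a) * (vv B (bs b) * vv B (bs f)))) ⁅ds f, x⁆
        simp only [LinearMap.smulRight_apply, LinearMap.comp_apply,
          LieAlgebra.ad_apply] at hf
        calc ∑ e, B (ds f) ⁅x, bs e⁆ • ((B (ds a) ⁅ds b, ds e⁆) •
              (vv (E := E) B (bs a) * (vv B (bs b) * vv B (bs f))))
            = ∑ e, B ⁅ds f, x⁆ (bs e) • ((B (ds a) ⁅ds b, ds e⁆) •
              (vv (E := E) B (bs a) * (vv B (bs b) * vv B (bs f)))) := by
              refine Finset.sum_congr rfl fun e _ => ?_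
              rw [hinv (ds f) x (bs e)]
          _ = (B (ds a) ⁅ds b, ⁅ds f, x⁆⁆) •
              (vv (E := E) B (bs a) * (vv B (bs b) * vv B (bs f))) := hf

include hBsym hB hinv hds in
theorem gamma_comm_qTheta (x : g) :
    gammaC (E := E) B bs ds x * qTheta B bs ds - qTheta B bs ds * gammaC B bs ds x = 0 := by
  unfold qTheta
  rw [mul_smul_comm, smul_mul_assoc, ← smul_sub]
  simp only [Finset.mul_sum, Finset.sum_mul]
  simp only [← Finset.sum_sub_distrib]
  have step : ∀ a b e : ι,
      gammaC (E := E) B bs ds x * ((B (ds a) ⁅ds b, ds e⁆) •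
          (vv B (bs a) * vv B (bs b) * vv B (bs e)))
        - ((B (ds a) ⁅ds b, ds e⁆) • (vv B (bs a) * vv B (bs b) * vv B (bs e)))
          * gammaC B bs ds x
      = (B (ds a) ⁅ds b, ds e⁆) • (vv B ⁅x, bs a⁆ * (vv B (bs b) * vv B (bs e)))
        + (B (ds a) ⁅ds b, ds e⁆) • (vv B (bs a) * (vv B ⁅x, bs b⁆ * vv B (bs e)))
        + (B (ds a) ⁅ds b, ds e⁆) • ((vv B (bs a) * vv B (bs b)) * vv B ⁅x, bs e⁆) := by
    intro a b e
    rw [mul_smul_comm, smul_mul_assoc, ← smul_sub,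
      gamma_comm_triple B hBsym hB hinv bs ds hds x (bs a) (bs b) (bs e)]
    rw [smul_add, smul_add]
  rw [Finset.sum_congr rfl fun a (_ : a ∈ Finset.univ) => Finset.sum_congr rfl
    fun b (_ : b ∈ Finset.univ) => Finset.sum_congr rfl
    fun e (_ : e ∈ Finset.univ) => step a b e]
  simp only [Finset.sum_add_distrib]
  rw [U1_eq B hBsym hB hinv bs ds hds x, U2_eq B hBsym hB hinv bs ds hds x,
    U3_eq B hBsym hB hinv bs ds hds x]
  simp only [← Finset.sum_add_distrib]
  have jacobi : ∀ b e : ι, (⁅x, ⁅ds b, ds e⁆⁆ + ⁅⁅ds b, x⁆, ds e⁆ + ⁅ds b, ⁅ds e, x⁆⁆ : g)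
      = 0 := by
    intro b e
    rw [leibniz_lie x (ds b) (ds e)]
    rw [show (⁅⁅ds b, x⁆, ds e⁆:g) = -⁅⁅x, ds b⁆, ds e⁆ by rw [br_comm (ds b) x, neg_lie]]
    rw [show (⁅ds b, ⁅ds e, x⁆⁆:g) = -⁅ds b, ⁅x, ds e⁆⁆ by rw [br_comm (ds e) x, lie_neg]]
    abel
  have inner : ∀ a b e : ι,
      (B (ds a) ⁅x, ⁅ds b, ds e⁆⁆) •
          (vv (E := E) B (bs a) * (vv B (bs b) * vv B (bs e)))
        + (B (ds a) ⁅⁅ds b, x⁆, ds e⁆) •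
          (vv (E := E) B (bs a) * (vv B (bs b) * vv B (bs e)))
        + (B (ds a) ⁅ds b, ⁅ds e, x⁆⁆) •
          (vv (E := E) B (bs a) * (vv B (bs b) * vv B (bs e))) = 0 := by
    intro a b e
    rw [← add_smul, ← add_smul, ← map_add, ← map_add, jacobi b e, map_zero, zero_smul]
  rw [Finset.sum_congr rfl fun a (_ : a ∈ Finset.univ) => Finset.sum_congr rfl
    fun b (_ : b ∈ Finset.univ) => Finset.sum_congr rfl
    fun e (_ : e ∈ Finset.univ) => inner a b e]
  simp


include hBsym hB hinv hds in
theorem involute_gammaC (x : g) :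
    involute (gammaC (E := E) B bs ds x) = gammaC B bs ds x := by
  unfold gammaC
  rw [map_smul, map_sum]
  refine congrArg _ (Finset.sum_congr rfl fun a _ => ?_)
  rw [map_mul, involute_vv, involute_vv, neg_mul_neg]

include hBsym in
theorem triple_ww (p q r : g) (u : E) :
    (vv (E := E) B p * vv B q * vv B r) * ww B u
      = -(ww B u * (vv B p * vv B q * vv B r)) := by
  have h1 : ∀ z : g, vv (E := E) B z * ww B u = -(ww B u * vv B z) :=
    fun z => ww_vv_swap B hBsym z u
  calc (vv (E := E) B p * vv B q * vv B r) * ww B u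
      = vv B p * (vv B q * (vv B r * ww B u)) := by noncomm_ring
    _ = vv B p * (vv B q * (-(ww B u * vv B r))) := by rw [h1 r]
    _ = -(vv B p * ((vv B q * ww B u) * vv B r)) := by noncomm_ring
    _ = -(vv B p * ((-(ww B u * vv B q)) * vv B r)) := by rw [h1 q]
    _ = (vv B p * ww B u) * (vv B q * vv B r) := by noncomm_ring
    _ = (-(ww B u * vv B p)) * (vv B q * vv B r) := by rw [h1 p]
    _ = -(ww B u * (vv B p * vv B q * vv B r)) := by noncomm_ring

include hBsym in
theorem ww_qTheta (u : E) :
    ww (E := E) B u * qTheta B bs ds = -(qTheta B bs ds * ww B u) := by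
  unfold qTheta
  rw [smul_mul_assoc, mul_smul_comm, ← smul_neg]
  refine congrArg _ ?_
  simp only [Finset.sum_mul, Finset.mul_sum]
  rw [← Finset.sum_neg_distrib]
  refine Finset.sum_congr rfl fun a _ => ?_
  rw [← Finset.sum_neg_distrib]
  refine Finset.sum_congr rfl fun b _ => ?_
  rw [← Finset.sum_neg_distrib]
  refine Finset.sum_congr rfl fun e _ => ?_
  rw [mul_smul_comm, smul_mul_assoc, ← smul_neg]
  refine congrArg _ ?_
  rw [triple_ww B hBsym, neg_neg]

include hBsym hB hinv hds in
theorem main_aux (φ : g →ₗ[ℝ] E) (μ : g) :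
    (qb (E := E) B ((-(6 : ℝ)⁻¹) • ∑ a, ∑ b, ∑ e,
      (B (ds a) ⁅ds b, ds e⁆) •
        (ExteriorAlgebra.ι ℝ ((bs a, 0) : g × E) *
          ExteriorAlgebra.ι ℝ ((bs b, 0) : g × E) *
          ExteriorAlgebra.ι ℝ ((bs e, 0) : g × E)))
      * (qb B ((1 / 2 : ℝ) • ∑ a,
          ExteriorAlgebra.ι ℝ ((⁅μ, bs a⁆, 0) : g × E) *
            ExteriorAlgebra.ι ℝ ((ds a, 0) : g × E))
        - ∑ a, vv B (bs a) * ww B (φ (ds a)))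
      - involute (qb B ((1 / 2 : ℝ) • ∑ a,
          ExteriorAlgebra.ι ℝ ((⁅μ, bs a⁆, 0) : g × E) *
            ExteriorAlgebra.ι ℝ ((ds a, 0) : g × E))
        - ∑ a, vv B (bs a) * ww B (φ (ds a)))
        * qb B ((-(6 : ℝ)⁻¹) • ∑ a, ∑ b, ∑ e,
          (B (ds a) ⁅ds b, ds e⁆) •
            (ExteriorAlgebra.ι ℝ ((bs a, 0) : g × E) *
              ExteriorAlgebra.ι ℝ ((bs b, 0) : g × E) *
              ExteriorAlgebra.ι ℝ ((bs e, 0) : g × E))))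
      + ∑ a, (qb B ((1 / 2 : ℝ) • ∑ c,
          ExteriorAlgebra.ι ℝ ((⁅bs a, bs c⁆, 0) : g × E) *
            ExteriorAlgebra.ι ℝ ((ds c, 0) : g × E)))
          * ww B (φ (ds a)) = 0 := by
  rw [Theta_quant B hBsym hinv bs ds]
  rw [gamma_eq B hBsym hB hinv bs ds hds μ]
  have hsum : ∑ a, (qb (E := E) B ((1 / 2 : ℝ) • ∑ c,
          ExteriorAlgebra.ι ℝ ((⁅bs a, bs c⁆, 0) : g × E) *
            ExteriorAlgebra.ι ℝ ((ds c, 0) : g × E)))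
          * ww B (φ (ds a))
      = ∑ a, gammaC B bs ds (bs a) * ww B (φ (ds a)) :=
    Finset.sum_congr rfl fun a _ => by
      rw [gamma_eq B hBsym hB hinv bs ds hds (bs a)]
  rw [hsum]
  have hinvS : involute (gammaC (E := E) B bs ds μ - ∑ a, vv B (bs a) * ww B (φ (ds a)))
      = gammaC B bs ds μ - ∑ a, vv B (bs a) * ww B (φ (ds a)) := by
    rw [map_sub, involute_gammaC B hBsym hB hinv bs ds hds, map_sum]
    have hterm : ∀ a : ι, involute (vv (E := E) B (bs a) * ww B (φ (ds a)))
        = vv B (bs a) * ww B (φ (ds a)) := fun a => by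
      rw [map_mul, involute_vv, involute_ww, neg_mul_neg]
    rw [Finset.sum_congr rfl fun a (_ : a ∈ Finset.univ) => hterm a]
  rw [hinvS]
  have hcomm := gamma_comm_qTheta (E := E) B hBsym hB hinv bs ds hds μ
  have hpart : qTheta (E := E) B bs ds * (∑ a, vv B (bs a) * ww B (φ (ds a)))
      - (∑ a, vv B (bs a) * ww B (φ (ds a))) * qTheta B bs ds
      = ∑ a, gammaC B bs ds (bs a) * ww B (φ (ds a)) := by
    rw [Finset.mul_sum, Finset.sum_mul, ← Finset.sum_sub_distrib]
    refine Finset.sum_congr rfl fun a _ => ?_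
    have hwq := ww_qTheta B hBsym bs ds (φ (ds a))
    calc qTheta (E := E) B bs ds * (vv B (bs a) * ww B (φ (ds a)))
          - (vv B (bs a) * ww B (φ (ds a))) * qTheta B bs ds
        = qTheta B bs ds * (vv B (bs a) * ww B (φ (ds a)))
          - vv B (bs a) * (ww B (φ (ds a)) * qTheta B bs ds) := by noncomm_ring
      _ = qTheta B bs ds * (vv B (bs a) * ww B (φ (ds a)))
          - vv B (bs a) * (-(qTheta B bs ds * ww B (φ (ds a)))) := by rw [hwq]
      _ = (qTheta B bs ds * vv B (bs a) + vv B (bs a) * qTheta B bs ds)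
            * ww B (φ (ds a)) := by noncomm_ring
      _ = gammaC B bs ds (bs a) * ww B (φ (ds a)) := by
          rw [qTheta_anticomm B hBsym hB hinv bs ds hds (bs a)]
  calc qTheta (E := E) B bs ds *
        (gammaC B bs ds μ - ∑ a, vv B (bs a) * ww B (φ (ds a)))
      - (gammaC B bs ds μ - ∑ a, vv B (bs a) * ww B (φ (ds a))) * qTheta B bs ds
      + ∑ a, gammaC B bs ds (bs a) * ww B (φ (ds a))
      = -(gammaC B bs ds μ * qTheta B bs ds - qTheta B bs ds * gammaC B bs ds μ)
        - (qTheta B bs ds * (∑ a, vv B (bs a) * ww B (φ (ds a)))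
            - (∑ a, vv B (bs a) * ww B (φ (ds a))) * qTheta B bs ds)
        + ∑ a, gammaC B bs ds (bs a) * ww B (φ (ds a)) := by noncomm_ring
    _ = 0 := by rw [hcomm, hpart]; simp

end CliffordClosed


/-- Let `g` be a quadratic Lie algebra, `E` a vector space, `φ : g → E` linear with
`φ^a = φ(e^a)`.  Realizing the ℤ₂-graded tensor product `Cl(g) ⊗ ΛE` as the Clifford
algebra of `g × E` with the form `Q₂ ⊕ 0`, the element `γ − Σ_a e_a ⊗ φ^a` (an affine
function of `μ ∈ g`, where `γ(μ) = q(λ(ad_μ))`) is closed under the differential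
`δ + Σ_a (∂/∂μ^a) ⊗ φ^a`, where `δ = [q(Θ),·]` is the Clifford differential; since the
element is affine in `μ`, the derivative term is `Σ_a γ(e_a)·φ^a`. -/
theorem clifford_element_closed {g E ι : Type*} [Fintype ι] [DecidableEq ι]
    [LieRing g] [LieAlgebra ℝ g] [Module.Finite ℝ g]
    [AddCommGroup E] [Module ℝ E]
    (B : LinearMap.BilinForm ℝ g)
    (hBsym : ∀ x y, B x y = B y x) (hB : B.Nondegenerate)
    (hinv : ∀ x y z, B ⁅x, y⁆ z = B x ⁅y, z⁆)
    (bs : Module.Basis ι ℝ g) (ds : ι → g)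
    (hds : ∀ a b, B (ds a) (bs b) = if a = b then 1 else 0)
    (φ : g →ₗ[ℝ] E) :
    letI Q2 : QuadraticForm ℝ g := (2 : ℝ)⁻¹ • B.toQuadraticMap
    letI QQ : QuadraticForm ℝ (g × E) := Q2.prod (0 : QuadraticForm ℝ E)
    letI qb : ExteriorAlgebra ℝ (g × E) ≃ₗ[ℝ] CliffordAlgebra QQ :=
      (CliffordAlgebra.equivExterior QQ).symm
    letI γ : g → CliffordAlgebra QQ := fun μ =>
      qb ((1 / 2 : ℝ) • ∑ a,
        ExteriorAlgebra.ι ℝ ((⁅μ, bs a⁆, 0) : g × E) *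
          ExteriorAlgebra.ι ℝ ((ds a, 0) : g × E))
    letI Θ : ExteriorAlgebra ℝ (g × E) := (-(6 : ℝ)⁻¹) • ∑ a, ∑ b, ∑ e,
      (B (ds a) ⁅ds b, ds e⁆) •
        (ExteriorAlgebra.ι ℝ ((bs a, 0) : g × E) *
          ExteriorAlgebra.ι ℝ ((bs b, 0) : g × E) *
          ExteriorAlgebra.ι ℝ ((bs e, 0) : g × E))
    letI δ : CliffordAlgebra QQ → CliffordAlgebra QQ := fun x =>
      qb Θ * x - CliffordAlgebra.involute x * qb Θ
    ∀ μ : g,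
      δ (γ μ - ∑ a, CliffordAlgebra.ι QQ ((bs a, 0) : g × E) *
            CliffordAlgebra.ι QQ ((0, φ (ds a)) : g × E))
        + ∑ a, γ (bs a) * CliffordAlgebra.ι QQ ((0, φ (ds a)) : g × E) = 0 := by
  exact fun μ => CliffordClosed.main_aux B hBsym hB hinv bs ds hds φ μ
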